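/- Every positive integer n is a sharing number: there exists a positive integer m (a multiple of n) such that for every positive integer k, every partition of k·m into parts that are divisors of n can be written as a disjoint union of k partitions, each summing to m. -/

import Mathlib

/-- `m` exhibits sharing for `n` if for every positive integer `k`, every multiset of
divisors of `n` summing to `k * m` can be partitioned into `k` sub-multisets each
summing to `m`. -/
def ExhibitsSharing (n m : ℕ) : Prop :=
  ∀ k : ℕ, 0 < k → ∀ s : Multiset ℕ, (∀ d ∈ s, d ∣ n) → s.sum = k * m →
    ∃ P : Multiset (Multiset ℕ),
      Multiset.card P = k ∧ P.join = s ∧ ∀ t ∈ P, Multiset.sum t = m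

lemma sharing_sum_count (s : Multiset ℕ) :
    s.sum = ∑ a ∈ s.toFinset, s.count a * a := by
  conv_lhs => rw [← Multiset.toFinset_sum_count_nsmul_eq s]
  rw [← Multiset.coe_sumAddMonoidHom, map_sum]
  refine Finset.sum_congr rfl fun a _ => ?_
  rw [Multiset.coe_sumAddMonoidHom, Multiset.nsmul_singleton, Multiset.sum_replicate,
    smul_eq_mul]

/-- If a multiset of divisors of `n` has sum at least `τ(n) * n`, one can extract a
sub-multiset summing to exactly `n` (namely `n/d` copies of some divisor `d`). -/
lemma sharing_chunk (n : ℕ) (hn : 0 < n) (s : Multiset ℕ) (hs : ∀ d ∈ s, d ∣ n)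
    (h : n.divisors.card * n ≤ s.sum) : ∃ t ≤ s, t.sum = n := by
  have key : ∃ d ∈ s, n / d ≤ s.count d := by
    by_contra hk
    push_neg at hk
    have hsub : s.toFinset ⊆ n.divisors := by
      intro a ha
      rw [Multiset.mem_toFinset] at ha
      exact Nat.mem_divisors.mpr ⟨hs a ha, hn.ne'⟩
    have hbound : ∀ a ∈ s.toFinset, s.count a * a ≤ n - 1 := by
      intro a ha
      rw [Multiset.mem_toFinset] at ha
      have hd : a ∣ n := hs a ha
      have ha0 : 0 < a := by
        rcases Nat.eq_zero_or_pos a with h0 | h0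
        · subst h0; simp at hd; omega
        · exact h0
      have hlt : s.count a < n / a := hk a ha
      have : (s.count a + 1) * a ≤ (n / a) * a := Nat.mul_le_mul_right a hlt
      rw [Nat.div_mul_cancel hd, add_mul, one_mul] at this
      omega
    have hle : s.sum ≤ n.divisors.card * (n - 1) := by
      rw [sharing_sum_count]
      calc ∑ a ∈ s.toFinset, s.count a * a ≤ ∑ _a ∈ s.toFinset, (n - 1) :=
            Finset.sum_le_sum hbound
        _ = s.toFinset.card * (n - 1) := by rw [Finset.sum_const, smul_eq_mul]
        _ ≤ n.divisors.card * (n - 1) :=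
            Nat.mul_le_mul_right _ (Finset.card_le_card hsub)
    have hcard : 0 < n.divisors.card :=
      Finset.card_pos.mpr ⟨n, Nat.mem_divisors_self n hn.ne'⟩
    have h2 : n.divisors.card * n ≤ n.divisors.card * (n - 1) := le_trans h hle
    have h3 : n ≤ n - 1 := Nat.le_of_mul_le_mul_left h2 hcard
    omega
  obtain ⟨d, hd, hcount⟩ := key
  refine ⟨Multiset.replicate (n / d) d, Multiset.le_count_iff_replicate_le.mp hcount, ?_⟩
  rw [Multiset.sum_replicate, smul_eq_mul, Nat.div_mul_cancel (hs d hd)]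

/-- Iterated extraction: from a multiset of divisors with large enough sum, one can
extract a sub-multiset summing to exactly `j * n`. -/
lemma sharing_chunks (n : ℕ) (hn : 0 < n) :
    ∀ j (s : Multiset ℕ), (∀ d ∈ s, d ∣ n) →
      (j + n.divisors.card) * n ≤ s.sum → ∃ t ≤ s, t.sum = j * n := by
  intro j
  induction j with
  | zero => exact fun s _ _ => ⟨0, Multiset.zero_le s, by simp⟩
  | succ j ih =>
    intro s hs h
    have h1 : n.divisors.card * n ≤ s.sum := by
      refine le_trans (Nat.mul_le_mul_right n ?_) h; omega
    obtain ⟨t₀, ht₀, hsum₀⟩ := sharing_chunk n hn s hs h1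
    have hrec : (s - t₀) + t₀ = s := tsub_add_cancel_of_le ht₀
    have hsumeq : (s - t₀).sum + n = s.sum := by
      conv_rhs => rw [← hrec]
      rw [Multiset.sum_add, hsum₀]
    have hs' : ∀ d ∈ s - t₀, d ∣ n := fun d hd =>
      hs d (Multiset.mem_of_le (tsub_le_self) hd)
    have h2 : (j + n.divisors.card) * n ≤ (s - t₀).sum := by
      have hexp : (j + 1 + n.divisors.card) * n = (j + n.divisors.card) * n + n := by ring
      omega
    obtain ⟨t₁, ht₁, hsum₁⟩ := ih (s - t₀) hs' h2
    refine ⟨t₀ + t₁, ?_, ?_⟩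
    · have : t₁ + t₀ ≤ (s - t₀) + t₀ := add_le_add ht₁ (le_refl t₀)
      rwa [hrec, add_comm] at this
    · rw [Multiset.sum_add, hsum₀, hsum₁]; ring

lemma sharing_main (n : ℕ) (hn : 0 < n) :
    ExhibitsSharing n (n * n.divisors.card) := by
  intro k
  induction k with
  | zero => intro h; omega
  | succ k ih =>
    intro _ s hs hsum
    rcases Nat.eq_zero_or_pos k with hk0 | hk0
    · subst hk0
      refine ⟨{s}, by simp, by simp, ?_⟩
      intro t ht
      rw [Multiset.mem_singleton] at ht
      subst ht
      rw [hsum]; ring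
    · -- extract one part summing to m
      set m := n * n.divisors.card with hm
      have hbig : (n.divisors.card + n.divisors.card) * n ≤ s.sum := by
        rw [hsum, hm]
        have : (n.divisors.card + n.divisors.card) * n = 2 * (n * n.divisors.card) := by ring
        rw [this]
        exact Nat.mul_le_mul_right _ (by omega)
      obtain ⟨t, ht, htsum⟩ := sharing_chunks n hn n.divisors.card s hs hbig
      have htm : t.sum = m := by rw [htsum, hm]; ring
      have hrec : (s - t) + t = s := tsub_add_cancel_of_le ht
      have hsumeq : (s - t).sum + m = s.sum := by
        conv_rhs => rw [← hrec]
        rw [Multiset.sum_add, htm]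
      have hs' : ∀ d ∈ s - t, d ∣ n := fun d hd =>
        hs d (Multiset.mem_of_le (tsub_le_self) hd)
      have hsum' : (s - t).sum = k * m := by
        have : (k + 1) * m = k * m + m := by ring
        omega
      obtain ⟨P, hPcard, hPjoin, hPsum⟩ := ih hk0 (s - t) hs' hsum'
      refine ⟨t ::ₘ P, ?_, ?_, ?_⟩
      · rw [Multiset.card_cons, hPcard]
      · rw [Multiset.join_cons, hPjoin, add_tsub_cancel_of_le ht]
      · intro u hu
        rcases Multiset.mem_cons.mp hu with h | h
        · subst h; exact htm
        · exact hPsum u h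

/-- Every positive integer is a sharing number: some positive multiple `m` of `n`
exhibits sharing for `n`. -/
theorem every_positive_integer_is_sharing_number (n : ℕ) (hn : 0 < n) :
    ∃ m : ℕ, 0 < m ∧ n ∣ m ∧ ExhibitsSharing n m := by
  refine ⟨n * n.divisors.card, ?_, Dvd.intro _ rfl, sharing_main n hn⟩
  have hcard : 0 < n.divisors.card :=
    Finset.card_pos.mpr ⟨n, Nat.mem_divisors_self n hn.ne'⟩
  positivity
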